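/- Let R be a p-torsion-free commutative ring and M a finite free R-module with F: N → M and V: M → N R-linear maps satisfying F∘V = p·id_M and V∘F = p·id_N (N finite free of the same rank). Writing M̄ = M/pM, N̄ = N/pN and F̄, V̄ for the reductions, the sequence N̄ →^{F̄} M̄ →^{V̄} N̄ →^{F̄} M̄ is exact, i.e. ker(V̄) = im(F̄) and ker(F̄) = im(V̄). -/
import Mathlib

open Pointwise

section aux

variable {p : ℕ} {R : Type*} [CommRing R]
variable {M : Type*} [AddCommGroup M] [Module R M]

lemma mem_psmul_top_iff (x : M) :
    x ∈ ((p : R) • (⊤ : Submodule R M)) ↔ ∃ y : M, (p : R) • y = x := by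
  constructor
  · intro h
    rw [← SetLike.mem_coe, Submodule.coe_pointwise_smul] at h
    obtain ⟨y, -, hy⟩ := h
    exact ⟨y, hy⟩
  · rintro ⟨y, rfl⟩
    exact Submodule.smul_mem_pointwise_smul y _ _ trivial

lemma torsion_free_of_free [Module.Free R M]
    (hpnzd : ∀ x : R, (p : R) * x = 0 → x = 0)
    (m : M) (hm : (p : R) • m = 0) : m = 0 := by
  set b := Module.Free.chooseBasis R M
  have h1 : b.repr ((p : R) • m) = 0 := by rw [hm]; simp
  rw [map_smul] at h1
  have h2 : b.repr m = 0 := by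
    ext i
    have h3 := DFunLike.congr_fun h1 i
    simpa using hpnzd _ (by simpa [smul_eq_mul] using h3)
  have := congrArg b.repr.symm h2
  simpa using this

end aux

theorem stmt5 (p : ℕ) (hp : p.Prime) (R : Type*) [CommRing R]
    (hpnzd : ∀ x : R, (p : R) * x = 0 → x = 0)
    (M N : Type*) [AddCommGroup M] [Module R M] [AddCommGroup N] [Module R N]
    [Module.Free R M] [Module.Finite R M] [Module.Free R N] [Module.Finite R N]
    (hrank : Module.finrank R N = Module.finrank R M)
    (F : N →ₗ[R] M) (V : M →ₗ[R] N)
    (hFV : F ∘ₗ V = (p : R) • LinearMap.id)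
    (hVF : V ∘ₗ F = (p : R) • LinearMap.id)
    (hF : ((p : R) • (⊤ : Submodule R N)) ≤
      Submodule.comap F ((p : R) • (⊤ : Submodule R M)))
    (hV : ((p : R) • (⊤ : Submodule R M)) ≤
      Submodule.comap V ((p : R) • (⊤ : Submodule R N))) :
    LinearMap.range (Submodule.mapQ ((p : R) • (⊤ : Submodule R N))
        ((p : R) • (⊤ : Submodule R M)) F hF) =
      LinearMap.ker (Submodule.mapQ ((p : R) • (⊤ : Submodule R M))
        ((p : R) • (⊤ : Submodule R N)) V hV) ∧
    LinearMap.range (Submodule.mapQ ((p : R) • (⊤ : Submodule R M))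
        ((p : R) • (⊤ : Submodule R N)) V hV) =
      LinearMap.ker (Submodule.mapQ ((p : R) • (⊤ : Submodule R N))
        ((p : R) • (⊤ : Submodule R M)) F hF) := by
  have hFVapp : ∀ x : M, F (V x) = (p : R) • x := fun x => LinearMap.congr_fun hFV x
  have hVFapp : ∀ x : N, V (F x) = (p : R) • x := fun x => LinearMap.congr_fun hVF x
  constructor
  · apply le_antisymm
    · rintro _ ⟨y, rfl⟩
      obtain ⟨n, rfl⟩ := Submodule.Quotient.mk_surjective _ y
      rw [LinearMap.mem_ker, Submodule.mapQ_apply, Submodule.mapQ_apply,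
        Submodule.Quotient.mk_eq_zero, hVFapp]
      exact Submodule.smul_mem_pointwise_smul n _ _ trivial
    · intro x hx
      obtain ⟨m, rfl⟩ := Submodule.Quotient.mk_surjective _ x
      rw [LinearMap.mem_ker, Submodule.mapQ_apply, Submodule.Quotient.mk_eq_zero,
        mem_psmul_top_iff] at hx
      obtain ⟨n, hn⟩ := hx
      have : (p : R) • (m - F n) = 0 := by
        rw [smul_sub, ← hFVapp m, ← hn, map_smul, sub_self]
      have hmn : m = F n := sub_eq_zero.mp (torsion_free_of_free (p := p) hpnzd _ this)
      exact ⟨Submodule.Quotient.mk n, by rw [Submodule.mapQ_apply, hmn]⟩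
  · apply le_antisymm
    · rintro _ ⟨y, rfl⟩
      obtain ⟨m, rfl⟩ := Submodule.Quotient.mk_surjective _ y
      rw [LinearMap.mem_ker, Submodule.mapQ_apply, Submodule.mapQ_apply,
        Submodule.Quotient.mk_eq_zero, hFVapp]
      exact Submodule.smul_mem_pointwise_smul m _ _ trivial
    · intro x hx
      obtain ⟨n, rfl⟩ := Submodule.Quotient.mk_surjective _ x
      rw [LinearMap.mem_ker, Submodule.mapQ_apply, Submodule.Quotient.mk_eq_zero,
        mem_psmul_top_iff] at hx
      obtain ⟨m, hm⟩ := hx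
      have h0 : (p : R) • (n - V m) = 0 := by
        rw [smul_sub, ← hVFapp n, ← hm, map_smul, sub_self]
      have hnm : n = V m := sub_eq_zero.mp (torsion_free_of_free (p := p) hpnzd _ h0)
      exact ⟨Submodule.Quotient.mk m, by rw [Submodule.mapQ_apply, hnm]⟩
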